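/- Let 𝓗 be a linear subspace of the space of holomorphic functions on 𝔻² containing the constant functions and having the division property: for every j ∈ {1,2}, every λ ∈ 𝔻 and every holomorphic h on 𝔻², if z ↦ (z_j − λ)h(z) belongs to 𝓗 then h ∈ 𝓗. Let w = (w₁,w₂) ∈ 𝔻² and suppose that for every f ∈ 𝓗, at least one of the functions (z₁,z₂) ↦ f(z₁,w₂) and (z₁,z₂) ↦ f(w₁,z₂) belongs to 𝓗. Then Gleason's problem can be solved for 𝓗 over {w}: for every f ∈ 𝓗 there exist g₁, g₂ ∈ 𝓗 with f(z) = f(w) + (z₁ − w₁)g₁(z) + (z₂ − w₂)g₂(z) for all z ∈ 𝔻². -/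

import Mathlib

open Complex Set Metric MeasureTheory intervalIntegral Topology Filter

set_option maxHeartbeats 1000000

noncomputable section

def bidisc : Set (ℂ × ℂ) := {z : ℂ × ℂ | ‖z.1‖ < 1 ∧ ‖z.2‖ < 1}

lemma isOpen_bidisc : IsOpen bidisc := by
  have : bidisc = (Metric.ball (0:ℂ) 1) ×ˢ (Metric.ball (0:ℂ) 1) := by
    ext z; simp [bidisc, Metric.mem_ball, Complex.dist_eq]
  rw [this]; exact isOpen_ball.prod isOpen_ball

lemma diffAt_of_mem {u : ℂ × ℂ → ℂ} (hu : DifferentiableOn ℂ u bidisc) {z : ℂ × ℂ}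
    (hz : z ∈ bidisc) : DifferentiableAt ℂ u z :=
  hu.differentiableAt (isOpen_bidisc.mem_nhds hz)

/-- slice in the first variable -/
lemma slice1_diffAt {u : ℂ × ℂ → ℂ} (hu : DifferentiableOn ℂ u bidisc) {s t : ℂ}
    (hs : ‖s‖ < 1) (ht : ‖t‖ < 1) :
    DifferentiableAt ℂ (fun s' => u (s', t)) s := by
  have h1 : DifferentiableAt ℂ (fun s' : ℂ => ((s', t) : ℂ × ℂ)) s :=
    differentiableAt_id.prodMk (differentiableAt_const t)
  have h2 : DifferentiableAt ℂ u (s, t) := diffAt_of_mem hu ⟨hs, ht⟩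
  exact h2.comp s h1

lemma slice2_diffAt {u : ℂ × ℂ → ℂ} (hu : DifferentiableOn ℂ u bidisc) {s t : ℂ}
    (hs : ‖s‖ < 1) (ht : ‖t‖ < 1) :
    DifferentiableAt ℂ (fun t' => u (s, t')) t := by
  have h1 : DifferentiableAt ℂ (fun t' : ℂ => ((s, t') : ℂ × ℂ)) t :=
    (differentiableAt_const s).prodMk differentiableAt_id
  have h2 : DifferentiableAt ℂ u (s, t) := diffAt_of_mem hu ⟨hs, ht⟩
  exact h2.comp t h1

/-- Cauchy estimate for the partial derivative in the first variable. -/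
lemma norm_d1_le {u : ℂ × ℂ → ℂ} (hu : DifferentiableOn ℂ u bidisc) {s t : ℂ} {ρ M : ℝ}
    (hρ : 0 < ρ) (hs : ‖s‖ + ρ < 1) (ht : ‖t‖ < 1)
    (hM : ∀ s' ∈ sphere s ρ, ‖u (s', t)‖ ≤ M) :
    ‖deriv (fun s' => u (s', t)) s‖ ≤ M / ρ := by
  have hsub : Metric.closedBall s ρ ⊆ Metric.ball (0:ℂ) 1 := by
    intro x hx
    simp only [Metric.mem_closedBall, Complex.dist_eq] at hx
    simp only [Metric.mem_ball, Complex.dist_eq, sub_zero]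
    calc ‖x‖ ≤ ‖x - s‖ + ‖s‖ := by
          simpa using norm_add_le (x - s) s
      _ ≤ ρ + ‖s‖ := by linarith
      _ < 1 := by linarith
  have hd : DifferentiableOn ℂ (fun s' => u (s', t)) (Metric.ball (0:ℂ) 1) := by
    intro x hx
    simp only [Metric.mem_ball, Complex.dist_eq, sub_zero] at hx
    exact (slice1_diffAt hu hx ht).differentiableWithinAt
  have key : Complex.cderiv ρ (fun s' => u (s', t)) s = deriv (fun s' => u (s', t)) s :=
    Complex.cderiv_eq_deriv isOpen_ball hd hρ hsub
  have hb2 : ‖Complex.cderiv ρ (fun s' => u (s', t)) s‖ ≤ M / ρ := by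
    refine Complex.norm_cderiv_le hρ ?_
    intro w hw
    exact hM w hw
  rw [← key]
  exact hb2

lemma Gdiff (u : ℂ × ℂ → ℂ) (hu : DifferentiableOn ℂ u bidisc) {b : ℂ} {r : ℝ}
    (hr : 0 < r) (hbr : ‖b‖ + r < 1) {a : ℂ} (ha : ‖a‖ < 1) :
    DifferentiableAt ℂ
      (fun z : ℂ × ℂ => (2 * Real.pi * Complex.I : ℂ)⁻¹ •
        ∮ t in C(b, r), ((t - b)⁻¹ * (t - z.2)⁻¹) • u (z.1, t)) (a, b) := by
  set ρ : ℝ := (1 - ‖a‖) / 4 with hρdef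
  have hρ : 0 < ρ := by rw [hρdef]; linarith
  have hR1 : ‖a‖ + 3 * ρ < 1 := by rw [hρdef]; linarith
  set ε : ℝ := min ρ (r / 2) with hεdef
  have hε : 0 < ε := lt_min hρ (by linarith)
  -- bound for u on a compact product set
  obtain ⟨M, hM0, hM⟩ : ∃ M : ℝ, 0 ≤ M ∧ ∀ s' t' : ℂ,
      ‖s'‖ ≤ ‖a‖ + 3 * ρ → ‖t' - b‖ ≤ r →
      ‖u (s', t')‖ ≤ M := by
    have hKsub : (Metric.closedBall (0:ℂ) (‖a‖ + 3 * ρ)) ×ˢ (Metric.closedBall b r)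
        ⊆ bidisc := by
      rintro ⟨s', t'⟩ ⟨hs', ht'⟩
      simp only [Metric.mem_closedBall, Complex.dist_eq, sub_zero] at hs' ht'
      refine ⟨lt_of_le_of_lt hs' hR1, ?_⟩
      calc ‖t'‖ = ‖(t' - b) + b‖ := by rw [sub_add_cancel]
        _ ≤ ‖t' - b‖ + ‖b‖ := norm_add_le _ _
        _ < 1 := by linarith
    obtain ⟨M, hM⟩ := ((isCompact_closedBall (0:ℂ) (‖a‖ + 3 * ρ)).prod
      (isCompact_closedBall b r)).exists_bound_of_continuousOn (hu.continuousOn.mono hKsub)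
    refine ⟨M, ?_, ?_⟩
    · have := hM (a, b) ⟨by simpa [Complex.dist_eq] using by linarith, by
        simp [Metric.mem_closedBall, dist_self, hr.le]⟩
      exact le_trans (norm_nonneg _) this
    · intro s' t' hs' ht'
      have := hM (s', t') ⟨by simpa [Complex.dist_eq] using hs', by
        simpa [Metric.mem_closedBall, Complex.dist_eq] using ht'⟩
      simpa using this
  -- basic facts about the circle
  have habs_c : ∀ θ : ℝ, ‖circleMap b r θ - b‖ = r := fun θ => by
    rw [circleMap_sub_center, norm_circleMap_zero, abs_of_pos hr]
  have hc_ne : ∀ θ : ℝ, circleMap b r θ - b ≠ 0 := fun θ =>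
    sub_ne_zero.2 (circleMap_ne_center hr.ne')
  have habs_cmem : ∀ θ : ℝ, ‖circleMap b r θ‖ < 1 := fun θ => by
    calc ‖circleMap b r θ‖
        = ‖(circleMap b r θ - b) + b‖ := by rw [sub_add_cancel]
      _ ≤ ‖circleMap b r θ - b‖ + ‖b‖ := norm_add_le _ _
      _ < 1 := by rw [habs_c θ]; linarith
  have hderiv_c : ∀ θ : ℝ, ‖deriv (circleMap b r) θ‖ = r := fun θ => by
    rw [deriv_circleMap]
    rw [norm_mul]
    simp [norm_circleMap_zero, abs_of_pos hr]
  have hx_ball : ∀ x : ℂ × ℂ, x ∈ Metric.ball ((a, b) : ℂ × ℂ) ε →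
      ‖x.1‖ < ‖a‖ + ρ ∧ ‖x.2 - b‖ < r / 2 := by
    intro x hx
    rw [Metric.mem_ball, Prod.dist_eq] at hx
    have h1 : dist x.1 a < ε := lt_of_le_of_lt (le_max_left _ _) hx
    have h2 : dist x.2 b < ε := lt_of_le_of_lt (le_max_right _ _) hx
    rw [Complex.dist_eq] at h1 h2
    constructor
    · calc ‖x.1‖ = ‖(x.1 - a) + a‖ := by rw [sub_add_cancel]
        _ ≤ ‖x.1 - a‖ + ‖a‖ := norm_add_le _ _
        _ < ε + ‖a‖ := by linarith
        _ ≤ ρ + ‖a‖ := by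
            have := min_le_left ρ (r / 2); rw [← hεdef] at this; linarith
        _ = ‖a‖ + ρ := by ring
    · exact lt_of_lt_of_le h2 (by rw [hεdef]; exact min_le_right _ _)
  have hcx_ge : ∀ (θ : ℝ) (x2 : ℂ), ‖x2 - b‖ < r / 2 →
      r / 2 ≤ ‖circleMap b r θ - x2‖ := by
    intro θ x2 hx2
    have h1 : ‖circleMap b r θ - b‖
        ≤ ‖circleMap b r θ - x2‖ + ‖x2 - b‖ := by
      have h2 := norm_add_le (circleMap b r θ - x2) (x2 - b)
      rw [sub_add_sub_cancel] at h2
      exact h2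
    rw [habs_c θ] at h1
    linarith
  have hcx_ne : ∀ (θ : ℝ) (x2 : ℂ), ‖x2 - b‖ < r / 2 →
      circleMap b r θ - x2 ≠ 0 := by
    intro θ x2 hx2 h0
    have := hcx_ge θ x2 hx2
    rw [h0] at this
    simp at this
    linarith
  set F : ℂ × ℂ → ℝ → ℂ := fun x θ =>
    (deriv (circleMap b r) θ * (circleMap b r θ - b)⁻¹) *
      ((circleMap b r θ - x.2)⁻¹ * u (x.1, circleMap b r θ)) with hFdef
  set F' : ℂ × ℂ → ℝ → (ℂ × ℂ →L[ℂ] ℂ) := fun x θ =>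
    ((deriv (circleMap b r) θ * (circleMap b r θ - b)⁻¹) *
      ((circleMap b r θ - x.2)⁻¹ * deriv (fun s => u (s, circleMap b r θ)) x.1)) •
        ContinuousLinearMap.fst ℂ ℂ ℂ
    + ((deriv (circleMap b r) θ * (circleMap b r θ - b)⁻¹) *
      (((circleMap b r θ - x.2)⁻¹) ^ 2 * u (x.1, circleMap b r θ))) •
        ContinuousLinearMap.snd ℂ ℂ ℂ with hF'def
  set μ : Measure ℝ := volume.restrict (Ioc (0:ℝ) (2 * Real.pi)) with hμdef
  -- continuity of θ ↦ F x θ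
  have hcont_F : ∀ x : ℂ × ℂ, ‖x.1‖ < 1 → ‖x.2 - b‖ < r / 2 →
      Continuous (fun θ => F x θ) := by
    intro x hx1 hx2
    have h1 : Continuous (fun θ => deriv (circleMap b r) θ) := by
      have : (fun θ => deriv (circleMap b r) θ) = fun θ => circleMap 0 r θ * Complex.I := by
        funext θ; rw [deriv_circleMap]
      rw [this]; exact (continuous_circleMap 0 r).mul continuous_const
    have h2 : Continuous (fun θ => (circleMap b r θ - b)⁻¹) :=
      ((continuous_circleMap b r).sub continuous_const).inv₀ hc_ne
    have h3 : Continuous (fun θ => (circleMap b r θ - x.2)⁻¹) :=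
      ((continuous_circleMap b r).sub continuous_const).inv₀ fun θ => hcx_ne θ x.2 hx2
    have h4 : Continuous (fun θ => u (x.1, circleMap b r θ)) := by
      refine hu.continuousOn.comp_continuous
        (continuous_const.prodMk (continuous_circleMap b r)) ?_
      exact fun θ => ⟨hx1, habs_cmem θ⟩
    exact (h1.mul h2).mul (h3.mul h4)
  have haMem : ‖((a, b) : ℂ × ℂ).1‖ < 1 := ha
  have hbMem : ‖((a, b) : ℂ × ℂ).2 - b‖ < r / 2 := by
    simp only [sub_self, norm_zero]; linarith
  -- measurability of the partial derivative in θ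
  have hmeas_d1 : AEStronglyMeasurable (fun θ => deriv (fun s => u (s, circleMap b r θ)) a) μ := by
    have hseq : ∀ n : ℕ, Continuous (fun θ =>
        (u (a + ((ρ / (n + 1) : ℝ) : ℂ), circleMap b r θ) - u (a, circleMap b r θ)) /
          ((ρ / (n + 1) : ℝ) : ℂ)) := by
      intro n
      have hpos : (0:ℝ) < ρ / (n + 1) := by positivity
      have hle : ρ / (n + 1) ≤ ρ := by
        rw [div_le_iff₀ (by positivity : (0:ℝ) < (n:ℝ) + 1)]
        nlinarith [hρ.le, Nat.cast_nonneg (α := ℝ) n]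
      have han : ‖a + ((ρ / (n + 1) : ℝ) : ℂ)‖ < 1 := by
        calc ‖a + ((ρ / (n + 1) : ℝ) : ℂ)‖
            ≤ ‖a‖ + ‖((ρ / (n + 1) : ℝ) : ℂ)‖ := norm_add_le _ _
          _ = ‖a‖ + ρ / (n + 1) := by rw [Complex.norm_of_nonneg hpos.le]
          _ ≤ ‖a‖ + ρ := by linarith
          _ < 1 := by linarith
      have hca : Continuous (fun θ => u (a + ((ρ / (n + 1) : ℝ) : ℂ), circleMap b r θ)) := by
        refine hu.continuousOn.comp_continuous
          (continuous_const.prodMk (continuous_circleMap b r)) ?_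
        exact fun θ => ⟨han, habs_cmem θ⟩
      have hcb : Continuous (fun θ => u (a, circleMap b r θ)) := by
        refine hu.continuousOn.comp_continuous
          (continuous_const.prodMk (continuous_circleMap b r)) ?_
        exact fun θ => ⟨ha, habs_cmem θ⟩
      exact (hca.sub hcb).div_const _
    have htend : ∀ θ : ℝ, Filter.Tendsto (fun n : ℕ =>
        (u (a + ((ρ / (n + 1) : ℝ) : ℂ), circleMap b r θ) - u (a, circleMap b r θ)) /
          ((ρ / (n + 1) : ℝ) : ℂ)) Filter.atTop
        (𝓝 (deriv (fun s => u (s, circleMap b r θ)) a)) := by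
      intro θ
      have hda : HasDerivAt (fun s => u (s, circleMap b r θ))
          (deriv (fun s => u (s, circleMap b r θ)) a) a :=
        (slice1_diffAt hu ha (habs_cmem θ)).hasDerivAt
      have hslope := hasDerivAt_iff_tendsto_slope.mp hda
      have hseq2 : Filter.Tendsto (fun n : ℕ => a + ((ρ / (n + 1) : ℝ) : ℂ)) Filter.atTop
          (𝓝[≠] a) := by
        apply tendsto_nhdsWithin_of_tendsto_nhds_of_eventually_within
        · have h0 : Filter.Tendsto (fun n : ℕ => (ρ / (n + 1) : ℝ)) Filter.atTop (𝓝 0) := by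
            have := tendsto_one_div_add_atTop_nhds_zero_nat (𝕜 := ℝ)
            have h2 := this.const_mul ρ
            simp only [mul_zero] at h2
            convert h2 using 2 with n
            · ring
          have h1 := (Complex.continuous_ofReal.tendsto 0).comp h0
          have h2 := tendsto_const_nhds (x := a) (f := Filter.atTop (α := ℕ)) |>.add h1
          simpa using h2
        · filter_upwards with n
          have hpos : (0:ℝ) < ρ / (n + 1) := by positivity
          simp only [mem_compl_iff, mem_singleton_iff]
          intro hcon
          have : ((ρ / (n + 1) : ℝ) : ℂ) = 0 := by
            have := congrArg (fun z => z - a) hcon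
            simpa [add_sub_cancel_left] using this
          rw [Complex.ofReal_eq_zero] at this
          linarith
      have hcomp := hslope.comp hseq2
      convert hcomp using 2 with n
      simp only [Function.comp_apply, slope_def_field, add_sub_cancel_left]
    exact aestronglyMeasurable_of_tendsto_ae Filter.atTop
      (fun n => (hseq n).aestronglyMeasurable)
      (Filter.Eventually.of_forall htend)
  -- pointwise differentiability in the parameter
  have h_diff : ∀ (θ : ℝ), ∀ x ∈ Metric.ball ((a, b) : ℂ × ℂ) ε,
      HasFDerivAt (fun y => F y θ) (F' x θ) x := by
    intro θ x hx
    obtain ⟨hx1, hx2⟩ := hx_ball x hx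
    have hx1' : ‖x.1‖ < 1 := by linarith
    have htne : circleMap b r θ - x.2 ≠ 0 := hcx_ne θ x.2 hx2
    have hd1 : HasDerivAt (fun s => u (s, circleMap b r θ))
        (deriv (fun s => u (s, circleMap b r θ)) x.1) x.1 :=
      (slice1_diffAt hu hx1' (habs_cmem θ)).hasDerivAt
    have hA : HasFDerivAt (fun y : ℂ × ℂ => u (y.1, circleMap b r θ))
        ((deriv (fun s => u (s, circleMap b r θ)) x.1) • ContinuousLinearMap.fst ℂ ℂ ℂ) x :=
      hd1.comp_hasFDerivAt x (hasFDerivAt_fst)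
    have hBin : HasFDerivAt (fun y : ℂ × ℂ => circleMap b r θ - y.2)
        (0 - ContinuousLinearMap.snd ℂ ℂ ℂ) x :=
      (hasFDerivAt_const _ x).sub (hasFDerivAt_snd)
    have hinv : HasDerivAt (fun w : ℂ => w⁻¹) (-((circleMap b r θ - x.2) ^ 2)⁻¹)
        (circleMap b r θ - x.2) := hasDerivAt_inv htne
    have hB0 := hinv.comp_hasFDerivAt x hBin
    have hB : HasFDerivAt (fun y : ℂ × ℂ => (circleMap b r θ - y.2)⁻¹)
        ((((circleMap b r θ - x.2)⁻¹) ^ 2) • ContinuousLinearMap.snd ℂ ℂ ℂ) x := by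
      refine hB0.congr_fderiv (ContinuousLinearMap.ext fun p => ?_)
      simp only [ContinuousLinearMap.coe_smul', Pi.smul_apply,
        ContinuousLinearMap.coe_sub', Pi.sub_apply, ContinuousLinearMap.coe_snd',
        ContinuousLinearMap.zero_apply, smul_eq_mul, inv_pow]
      ring
    have hprod := hB.mul hA
    have hfull := hprod.const_mul (deriv (circleMap b r) θ * (circleMap b r θ - b)⁻¹)
    refine hfull.congr_fderiv (ContinuousLinearMap.ext fun p => ?_)
    simp only [hF'def, ContinuousLinearMap.add_apply, ContinuousLinearMap.coe_smul',
      Pi.smul_apply, ContinuousLinearMap.coe_fst', ContinuousLinearMap.coe_snd',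
      smul_eq_mul]
    ring
  -- uniform bound on the derivative
  set C0 : ℝ := r * (1 / r) * (2 / r * (M / ρ)) + r * (1 / r) * ((2 / r) ^ 2 * M) with hC0def
  have h_bound : ∀ (θ : ℝ), ∀ x ∈ Metric.ball ((a, b) : ℂ × ℂ) ε, ‖F' x θ‖ ≤ C0 := by
    intro θ x hx
    obtain ⟨hx1, hx2⟩ := hx_ball x hx
    have hx1' : ‖x.1‖ < 1 := by linarith
    have hd1_bound : ‖deriv (fun s => u (s, circleMap b r θ)) x.1‖ ≤ M / ρ := by
      refine norm_d1_le hu hρ (by linarith) (habs_cmem θ) ?_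
      intro s' hs'
      rw [mem_sphere_iff_norm] at hs'
      refine hM s' _ ?_ (le_of_eq (habs_c θ))
      calc ‖s'‖ = ‖(s' - x.1) + x.1‖ := by rw [sub_add_cancel]
        _ ≤ ‖s' - x.1‖ + ‖x.1‖ := norm_add_le _ _
        _ = ρ + ‖x.1‖ := by rw [hs']
        _ ≤ ‖a‖ + 3 * ρ := by linarith
    have hinv1 : ‖(circleMap b r θ - b)⁻¹‖ = 1 / r := by
      rw [norm_inv, habs_c θ, one_div]
    have hinv2 : ‖(circleMap b r θ - x.2)⁻¹‖ ≤ 2 / r := by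
      rw [norm_inv]
      have h1 := hcx_ge θ x.2 hx2
      have h2 : (0:ℝ) < r / 2 := by linarith
      calc (‖circleMap b r θ - x.2‖)⁻¹ ≤ (r / 2)⁻¹ := by
            apply inv_anti₀ h2 h1
        _ = 2 / r := by rw [inv_div]
    have huB : ‖u (x.1, circleMap b r θ)‖ ≤ M := by
      refine hM _ _ (by linarith) (le_of_eq (habs_c θ))
    have hfst : ‖ContinuousLinearMap.fst ℂ ℂ ℂ‖ ≤ 1 := by
      refine ContinuousLinearMap.opNorm_le_bound _ zero_le_one fun p => ?_
      rw [one_mul]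
      exact norm_fst_le p
    have hsnd : ‖ContinuousLinearMap.snd ℂ ℂ ℂ‖ ≤ 1 := by
      refine ContinuousLinearMap.opNorm_le_bound _ zero_le_one fun p => ?_
      rw [one_mul]
      exact norm_snd_le p
    have hc1 : ‖deriv (circleMap b r) θ * (circleMap b r θ - b)⁻¹ *
        ((circleMap b r θ - x.2)⁻¹ * deriv (fun s => u (s, circleMap b r θ)) x.1)‖
        ≤ r * (1 / r) * (2 / r * (M / ρ)) := by
      rw [norm_mul, norm_mul, norm_mul, hderiv_c θ, hinv1]
      have hMρ : 0 ≤ M / ρ := div_nonneg hM0 hρ.le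
      gcongr
    have hc2 : ‖deriv (circleMap b r) θ * (circleMap b r θ - b)⁻¹ *
        ((circleMap b r θ - x.2)⁻¹ ^ 2 * u (x.1, circleMap b r θ))‖
        ≤ r * (1 / r) * ((2 / r) ^ 2 * M) := by
      rw [norm_mul, norm_mul, norm_mul, norm_pow, hderiv_c θ, hinv1]
      gcongr
    calc ‖F' x θ‖ ≤ ‖(deriv (circleMap b r) θ * (circleMap b r θ - b)⁻¹ *
            ((circleMap b r θ - x.2)⁻¹ * deriv (fun s => u (s, circleMap b r θ)) x.1)) •
              ContinuousLinearMap.fst ℂ ℂ ℂ‖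
          + ‖(deriv (circleMap b r) θ * (circleMap b r θ - b)⁻¹ *
            ((circleMap b r θ - x.2)⁻¹ ^ 2 * u (x.1, circleMap b r θ))) •
              ContinuousLinearMap.snd ℂ ℂ ℂ‖ := norm_add_le _ _
      _ ≤ r * (1 / r) * (2 / r * (M / ρ)) * 1 + r * (1 / r) * ((2 / r) ^ 2 * M) * 1 := by
          have hnn1 : (0:ℝ) ≤ r * (1 / r) * (2 / r * (M / ρ)) := by
            have h1 : (0:ℝ) ≤ M / ρ := div_nonneg hM0 hρ.le
            have h2 : (0:ℝ) ≤ 2 / r := by positivity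
            have h3 : (0:ℝ) ≤ r * (1 / r) := by positivity
            exact mul_nonneg h3 (mul_nonneg h2 h1)
          have hnn2 : (0:ℝ) ≤ r * (1 / r) * ((2 / r) ^ 2 * M) := by
            have h2 : (0:ℝ) ≤ (2 / r) ^ 2 := by positivity
            have h3 : (0:ℝ) ≤ r * (1 / r) := by positivity
            exact mul_nonneg h3 (mul_nonneg h2 hM0)
          refine add_le_add ?_ ?_
          · refine le_trans (ContinuousLinearMap.opNorm_smul_le _ _) ?_
            refine mul_le_mul ?_ hfst (norm_nonneg _) hnn1
            simpa using hc1
          · refine le_trans (ContinuousLinearMap.opNorm_smul_le _ _) ?_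
            refine mul_le_mul ?_ hsnd (norm_nonneg _) hnn2
            simpa using hc2
      _ = C0 := by rw [hC0def]; ring
  -- the circle integral as an integral against μ
  have hGint : ∀ x : ℂ × ℂ,
      (∮ t in C(b, r), ((t - b)⁻¹ * (t - x.2)⁻¹) • u (x.1, t)) = ∫ θ, F x θ ∂μ := by
    intro x
    have h1 : (∮ t in C(b, r), ((t - b)⁻¹ * (t - x.2)⁻¹) • u (x.1, t))
        = ∫ θ in (0:ℝ)..(2 * Real.pi), F x θ := by
      simp only [circleIntegral]
      refine intervalIntegral.integral_congr fun θ _ => ?_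
      simp only [hFdef, smul_eq_mul]
      ring
    rw [h1, hμdef, intervalIntegral.integral_of_le Real.two_pi_pos.le]
  -- apply the dominated-derivative theorem
  have hmain : HasFDerivAt (fun x : ℂ × ℂ => ∫ θ, F x θ ∂μ) (∫ θ, F' (a, b) θ ∂μ) (a, b) := by
    apply _root_.hasFDerivAt_integral_of_dominated_of_fderiv_le (F' := F') (bound := fun _ => C0) (Metric.ball_mem_nhds ((a, b) : ℂ × ℂ) hε)
    · filter_upwards [Metric.ball_mem_nhds ((a, b) : ℂ × ℂ) hε] with x hx
      obtain ⟨hx1, hx2⟩ := hx_ball x hx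
      exact (hcont_F x (by linarith) hx2).aestronglyMeasurable
    · have hc := hcont_F (a, b) haMem hbMem
      rw [hμdef]
      exact ((hc.intervalIntegrable 0 (2 * Real.pi)).def' ).mono_set (by
        rw [uIoc_of_le Real.two_pi_pos.le])
    · refine AEStronglyMeasurable.add ?_ ?_
      · refine AEStronglyMeasurable.fun_smul ?_ aestronglyMeasurable_const
        have hcont1 : Continuous (fun θ =>
            deriv (circleMap b r) θ * (circleMap b r θ - b)⁻¹ * (circleMap b r θ - b)⁻¹) := by
          have h1 : Continuous (fun θ => deriv (circleMap b r) θ) := by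
            have : (fun θ => deriv (circleMap b r) θ)
                = fun θ => circleMap 0 r θ * Complex.I := by
              funext θ; rw [deriv_circleMap]
            rw [this]; exact (continuous_circleMap 0 r).mul continuous_const
          have h2 : Continuous (fun θ => (circleMap b r θ - b)⁻¹) :=
            ((continuous_circleMap b r).sub continuous_const).inv₀ hc_ne
          exact (h1.mul h2).mul h2
        have := (hcont1.aestronglyMeasurable (μ := μ)).mul hmeas_d1
        refine AEStronglyMeasurable.congr this ?_
        filter_upwards with θ
        show deriv (circleMap b r) θ * (circleMap b r θ - b)⁻¹ * (circleMap b r θ - b)⁻¹ *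
            deriv (fun s => u (s, circleMap b r θ)) a
          = deriv (circleMap b r) θ * (circleMap b r θ - b)⁻¹ *
            ((circleMap b r θ - ((a, b) : ℂ × ℂ).2)⁻¹ * deriv (fun s => u (s, circleMap b r θ)) a)
        ring
      · refine AEStronglyMeasurable.fun_smul ?_ aestronglyMeasurable_const
        have h1 : Continuous (fun θ => deriv (circleMap b r) θ) := by
          have : (fun θ => deriv (circleMap b r) θ)
              = fun θ => circleMap 0 r θ * Complex.I := by
            funext θ; rw [deriv_circleMap]
          rw [this]; exact (continuous_circleMap 0 r).mul continuous_const
        have h2 : Continuous (fun θ => (circleMap b r θ - b)⁻¹) :=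
          ((continuous_circleMap b r).sub continuous_const).inv₀ hc_ne
        have h4 : Continuous (fun θ => u (((a, b) : ℂ × ℂ).1, circleMap b r θ)) := by
          refine hu.continuousOn.comp_continuous
            (continuous_const.prodMk (continuous_circleMap b r)) ?_
          exact fun θ => ⟨ha, habs_cmem θ⟩
        exact (((h1.mul h2).mul ((h2.pow 2).mul h4)).aestronglyMeasurable (μ := μ)).congr (by
          filter_upwards with θ
          show deriv (circleMap b r) θ * (circleMap b r θ - b)⁻¹ *
              (((circleMap b r θ - b)⁻¹) ^ 2 * u (((a, b) : ℂ × ℂ).1, circleMap b r θ))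
            = deriv (circleMap b r) θ * (circleMap b r θ - b)⁻¹ *
              ((circleMap b r θ - ((a, b) : ℂ × ℂ).2)⁻¹ ^ 2 * u (((a, b) : ℂ × ℂ).1, circleMap b r θ))
          rfl)
    · exact Filter.Eventually.of_forall fun θ => fun x hx => h_bound θ x hx
    · refine MeasureTheory.integrable_const_iff.mpr (Or.inr ?_)
      rw [hμdef]
      exact isFiniteMeasure_restrict.mpr measure_Ioc_lt_top.ne
    · exact Filter.Eventually.of_forall fun θ => fun x hx => h_diff θ x hx
  have hdiffInt : DifferentiableAt ℂ (fun x : ℂ × ℂ => ∫ θ, F x θ ∂μ) (a, b) :=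
    hmain.differentiableAt
  have hfun : (fun z : ℂ × ℂ => (2 * Real.pi * Complex.I : ℂ)⁻¹ •
      ∮ t in C(b, r), ((t - b)⁻¹ * (t - z.2)⁻¹) • u (z.1, t))
      = fun z : ℂ × ℂ => (2 * Real.pi * Complex.I : ℂ)⁻¹ • ∫ θ, F z θ ∂μ := by
    funext z; rw [hGint z]
  rw [hfun]
  exact hdiffInt.const_smul ((2 * Real.pi * Complex.I : ℂ)⁻¹)

lemma keylemma (u : ℂ × ℂ → ℂ) (hu : DifferentiableOn ℂ u bidisc) (b : ℂ)
    (hb : ‖b‖ < 1) (hvan : ∀ z : ℂ × ℂ, z.2 = b → u z = 0) :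
    ∃ g : ℂ × ℂ → ℂ, DifferentiableOn ℂ g bidisc ∧ ∀ z, u z = (z.2 - b) * g z := by
  classical
  set r : ℝ := (1 - ‖b‖) / 2 with hrdef
  have hr : 0 < r := by rw [hrdef]; linarith
  have hbr : ‖b‖ + r < 1 := by rw [hrdef]; linarith
  set G : ℂ × ℂ → ℂ := fun z => (2 * Real.pi * Complex.I : ℂ)⁻¹ •
      ∮ t in C(b, r), ((t - b)⁻¹ * (t - z.2)⁻¹) • u (z.1, t) with hGdef
  have hsub : Metric.closedBall b r ⊆ Metric.ball (0:ℂ) 1 := by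
    intro t ht
    simp only [Metric.mem_closedBall, Complex.dist_eq] at ht
    simp only [Metric.mem_ball, Complex.dist_eq, sub_zero]
    calc ‖t‖ = ‖(t - b) + b‖ := by rw [sub_add_cancel]
      _ ≤ ‖t - b‖ + ‖b‖ := norm_add_le _ _
      _ < 1 := by linarith
  have hslice : ∀ z₁ : ℂ, ‖z₁‖ < 1 →
      DifferentiableOn ℂ (fun t => u (z₁, t)) (Metric.ball (0:ℂ) 1) := by
    intro z₁ hz₁ t ht
    simp only [Metric.mem_ball, Complex.dist_eq, sub_zero] at ht
    exact (slice2_diffAt hu hz₁ ht).differentiableWithinAt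
  have cauchy : ∀ z₁ : ℂ, ‖z₁‖ < 1 → ∀ ζ : ℂ, ζ ∈ Metric.ball b r →
      (2 * Real.pi * Complex.I : ℂ)⁻¹ • (∮ t in C(b, r), (t - ζ)⁻¹ • u (z₁, t)) = u (z₁, ζ) := by
    intro z₁ hz₁ ζ hζ
    have h1 : DiffContOnCl ℂ (fun t => u (z₁, t)) (Metric.ball b r) := by
      apply DifferentiableOn.diffContOnCl
      rw [closure_ball b hr.ne']
      exact (hslice z₁ hz₁).mono hsub
    exact h1.two_pi_i_inv_smul_circleIntegral_sub_inv_smul hζ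
  have ci : ∀ z₁ : ℂ, ‖z₁‖ < 1 → ∀ ζ : ℂ, ζ ∈ Metric.ball b r →
      CircleIntegrable (fun t => (t - ζ)⁻¹ • u (z₁, t)) b r := by
    intro z₁ hz₁ ζ hζ
    apply ContinuousOn.circleIntegrable hr.le
    have hker : ContinuousOn (fun t : ℂ => (t - ζ)⁻¹) (Metric.sphere b r) := by
      apply ContinuousOn.inv₀ (continuousOn_id.sub continuousOn_const)
      intro t ht
      rw [mem_sphere_iff_norm] at ht
      rw [Metric.mem_ball, Complex.dist_eq] at hζ
      intro h0
      have : t = ζ := sub_eq_zero.mp h0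
      rw [this] at ht
      rw [ht] at hζ
      linarith
    have hcu : ContinuousOn (fun t => u (z₁, t)) (Metric.sphere b r) := by
      refine ((hslice z₁ hz₁).continuousOn).mono ?_
      exact subset_trans Metric.sphere_subset_closedBall hsub
    exact hker.smul hcu
  have Geq : ∀ z : ℂ × ℂ, ‖z.1‖ < 1 → z.2 ∈ Metric.ball b r → z.2 ≠ b →
      G z = u z / (z.2 - b) := by
    intro z hz1 hz2 hne
    have hbmem : b ∈ Metric.ball b r := Metric.mem_ball_self hr
    have h2ne : z.2 - b ≠ 0 := sub_ne_zero.2 hne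
    have hint : (∮ t in C(b, r), ((t - b)⁻¹ * (t - z.2)⁻¹) • u (z.1, t))
        = (z.2 - b)⁻¹ • ((∮ t in C(b, r), (t - z.2)⁻¹ • u (z.1, t))
            - ∮ t in C(b, r), (t - b)⁻¹ • u (z.1, t)) := by
      rw [← circleIntegral.integral_sub (ci z.1 hz1 z.2 hz2) (ci z.1 hz1 b hbmem),
        ← circleIntegral.integral_smul]
      refine circleIntegral.integral_congr hr.le fun t ht => ?_
      rw [mem_sphere_iff_norm] at ht
      have htb : t - b ≠ 0 := by
        intro h0; rw [h0] at ht; simp at ht; linarith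
      have htz : t - z.2 ≠ 0 := by
        rw [Metric.mem_ball, Complex.dist_eq] at hz2
        intro h0
        have : t = z.2 := by rwa [sub_eq_zero] at h0
        rw [this] at ht; rw [ht] at hz2; linarith
      simp only [smul_eq_mul, Pi.sub_apply]
      field_simp
      ring
    rw [hGdef]
    show (2 * Real.pi * Complex.I : ℂ)⁻¹ •
      (∮ t in C(b, r), ((t - b)⁻¹ * (t - z.2)⁻¹) • u (z.1, t)) = u z / (z.2 - b)
    rw [hint, smul_comm, smul_sub, cauchy z.1 hz1 z.2 hz2, cauchy z.1 hz1 b hbmem,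
      hvan (z.1, b) rfl, sub_zero]
    rw [smul_eq_mul, div_eq_inv_mul]
  refine ⟨fun z => if z.2 = b then G z else u z / (z.2 - b), ?_, ?_⟩
  · intro z hz
    by_cases h2 : z.2 = b
    · have hGd : DifferentiableAt ℂ G (z.1, b) := Gdiff u hu hr hbr hz.1
      have hzb : z = (z.1, b) := by
        rw [← h2]
      have hVopen : IsOpen {x : ℂ × ℂ | ‖x.1‖ < 1 ∧ x.2 ∈ Metric.ball b r} := by
        have : {x : ℂ × ℂ | ‖x.1‖ < 1 ∧ x.2 ∈ Metric.ball b r}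
            = (Metric.ball (0:ℂ) 1) ×ˢ (Metric.ball b r) := by
          ext x; simp [Metric.mem_ball, Complex.dist_eq]
        rw [this]; exact isOpen_ball.prod isOpen_ball
      have hV : {x : ℂ × ℂ | ‖x.1‖ < 1 ∧ x.2 ∈ Metric.ball b r} ∈ 𝓝 ((z.1, b) : ℂ × ℂ) :=
        hVopen.mem_nhds ⟨hz.1, Metric.mem_ball_self hr⟩
      have heq : ∀ x ∈ {x : ℂ × ℂ | ‖x.1‖ < 1 ∧ x.2 ∈ Metric.ball b r},
          (fun z : ℂ × ℂ => if z.2 = b then G z else u z / (z.2 - b)) x = G x := by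
        intro x hx
        by_cases hxb : x.2 = b
        · simp only [if_pos hxb]
        · simp only [if_neg hxb]
          exact (Geq x hx.1 hx.2 hxb).symm
      have hdat : DifferentiableAt ℂ
          (fun z : ℂ × ℂ => if z.2 = b then G z else u z / (z.2 - b)) (z.1, b) :=
        hGd.congr_of_eventuallyEq (Filter.eventuallyEq_of_mem hV heq)
      rw [← hzb] at hdat
      exact hdat.differentiableWithinAt
    · have hqd : DifferentiableAt ℂ (fun x : ℂ × ℂ => u x / (x.2 - b)) z := by
        have hud : DifferentiableAt ℂ u z := diffAt_of_mem hu hz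
        have hden : DifferentiableAt ℂ (fun x : ℂ × ℂ => x.2 - b) z :=
          (differentiable_snd.sub_const b).differentiableAt
        have hinv : DifferentiableAt ℂ (fun x : ℂ × ℂ => (x.2 - b)⁻¹) z :=
          hden.inv (sub_ne_zero.2 h2)
        have : DifferentiableAt ℂ (fun x : ℂ × ℂ => u x * (x.2 - b)⁻¹) z := hud.mul hinv
        refine this.congr_of_eventuallyEq ?_
        filter_upwards with x
        rw [div_eq_mul_inv]
      have hV : {x : ℂ × ℂ | x.2 ≠ b} ∈ 𝓝 z := by
        refine IsOpen.mem_nhds ?_ h2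
        exact isOpen_compl_singleton.preimage continuous_snd
      have heq : ∀ x ∈ {x : ℂ × ℂ | x.2 ≠ b},
          (fun z : ℂ × ℂ => if z.2 = b then G z else u z / (z.2 - b)) x
            = u x / (x.2 - b) := by
        intro x hx
        simp only [if_neg hx]
      exact (hqd.congr_of_eventuallyEq
        (Filter.eventuallyEq_of_mem hV heq)).differentiableWithinAt
  · intro z
    show u z = (z.2 - b) * (if z.2 = b then G z else u z / (z.2 - b))
    by_cases h2 : z.2 = b
    · rw [if_pos h2, hvan z h2, h2, sub_self, zero_mul]
    · rw [if_neg h2, mul_div_cancel₀ _ (sub_ne_zero.2 h2)]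

/-- Division lemma in the first variable, by symmetry. -/
lemma keylemma1 (u : ℂ × ℂ → ℂ) (hu : DifferentiableOn ℂ u bidisc) (b : ℂ)
    (hb : ‖b‖ < 1) (hvan : ∀ z : ℂ × ℂ, z.1 = b → u z = 0) :
    ∃ g : ℂ × ℂ → ℂ, DifferentiableOn ℂ g bidisc ∧ ∀ z, u z = (z.1 - b) * g z := by
  have hswap : Differentiable ℂ (fun z : ℂ × ℂ => (z.2, z.1)) :=
    differentiable_snd.prodMk differentiable_fst
  have husw : DifferentiableOn ℂ (fun z : ℂ × ℂ => u (z.2, z.1)) bidisc := by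
    refine DifferentiableOn.comp (t := bidisc) hu hswap.differentiableOn ?_
    intro z hz
    exact ⟨hz.2, hz.1⟩
  obtain ⟨g', hg'd, hg'⟩ := keylemma (fun z : ℂ × ℂ => u (z.2, z.1)) husw b hb
    (fun z hz => hvan (z.2, z.1) hz)
  refine ⟨fun z => g' (z.2, z.1), ?_, ?_⟩
  · refine DifferentiableOn.comp (t := bidisc) hg'd hswap.differentiableOn ?_
    intro z hz
    exact ⟨hz.2, hz.1⟩
  · intro z
    have := hg' (z.2, z.1)
    simpa using this

/-- Let `𝓗` be a linear subspace of holomorphic functions on `𝔻²` containing the constants and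
having the division property. If `w ∈ 𝔻²` is such that for every `f ∈ 𝓗` at least one of the
slices `f(·, w₂)`, `f(w₁, ·)` belongs to `𝓗`, then Gleason's problem can be solved for `𝓗`
over `{w}`. -/
theorem stmt16 (H : Submodule ℂ ((ℂ × ℂ) → ℂ))
    (hhol : ∀ f ∈ H, DifferentiableOn ℂ f bidisc)
    (hconst : (fun _ : ℂ × ℂ => (1:ℂ)) ∈ H)
    (hdiv1 : ∀ lam : ℂ, ‖lam‖ < 1 → ∀ h : ℂ × ℂ → ℂ,
      DifferentiableOn ℂ h bidisc → (fun z : ℂ × ℂ => (z.1 - lam) * h z) ∈ H → h ∈ H)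
    (hdiv2 : ∀ lam : ℂ, ‖lam‖ < 1 → ∀ h : ℂ × ℂ → ℂ,
      DifferentiableOn ℂ h bidisc → (fun z : ℂ × ℂ => (z.2 - lam) * h z) ∈ H → h ∈ H)
    (w : ℂ × ℂ) (hw : w ∈ bidisc)
    (hslice : ∀ f ∈ H, (fun z : ℂ × ℂ => f (z.1, w.2)) ∈ H ∨
      (fun z : ℂ × ℂ => f (w.1, z.2)) ∈ H) :
    ∀ f ∈ H, ∃ g₁ g₂ : ℂ × ℂ → ℂ, g₁ ∈ H ∧ g₂ ∈ H ∧
      ∀ z ∈ bidisc, f z = f w + (z.1 - w.1) * g₁ z + (z.2 - w.2) * g₂ z := by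
  intro f hf
  have hw1 : ‖w.1‖ < 1 := hw.1
  have hw2 : ‖w.2‖ < 1 := hw.2
  rcases hslice f hf with hF | hF
  · -- the slice z ↦ f (z.1, w.2) belongs to H
    have huH : (fun z : ℂ × ℂ => f z - f (z.1, w.2)) ∈ H := by
      have h0 := H.sub_mem hf hF
      have heq : f - (fun z : ℂ × ℂ => f (z.1, w.2))
          = fun z : ℂ × ℂ => f z - f (z.1, w.2) := by
        funext z; simp
      exact heq ▸ h0
    have hud : DifferentiableOn ℂ (fun z : ℂ × ℂ => f z - f (z.1, w.2)) bidisc := hhol _ huH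
    obtain ⟨g₂, hg₂d, hg₂⟩ := keylemma _ hud w.2 hw2
      (fun z hz => by rw [← hz, Prod.mk.eta, sub_self])
    have hg₂H : g₂ ∈ H := by
      apply hdiv2 w.2 hw2 g₂ hg₂d
      have heq : (fun z : ℂ × ℂ => (z.2 - w.2) * g₂ z)
          = fun z : ℂ × ℂ => f z - f (z.1, w.2) := by
        funext z; rw [← hg₂ z]
      rw [heq]; exact huH
    have hvH : (fun z : ℂ × ℂ => f (z.1, w.2) - f w) ∈ H := by
      have h1 := H.smul_mem (f w) hconst
      have h0 := H.sub_mem hF h1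
      have heq : (fun z : ℂ × ℂ => f (z.1, w.2)) - f w • (fun _ : ℂ × ℂ => (1:ℂ))
          = fun z : ℂ × ℂ => f (z.1, w.2) - f w := by
        funext z; simp
      exact heq ▸ h0
    have hvd : DifferentiableOn ℂ (fun z : ℂ × ℂ => f (z.1, w.2) - f w) bidisc := hhol _ hvH
    obtain ⟨g₁, hg₁d, hg₁⟩ := keylemma1 _ hvd w.1 hw1
      (fun z hz => by rw [hz, Prod.mk.eta, sub_self])
    have hg₁H : g₁ ∈ H := by
      apply hdiv1 w.1 hw1 g₁ hg₁d
      have heq : (fun z : ℂ × ℂ => (z.1 - w.1) * g₁ z)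
          = fun z : ℂ × ℂ => f (z.1, w.2) - f w := by
        funext z; rw [← hg₁ z]
      rw [heq]; exact hvH
    refine ⟨g₁, g₂, hg₁H, hg₂H, fun z _ => ?_⟩
    have h1 := hg₁ z
    have h2 := hg₂ z
    linear_combination h1 + h2
  · -- the slice z ↦ f (w.1, z.2) belongs to H
    have huH : (fun z : ℂ × ℂ => f z - f (w.1, z.2)) ∈ H := by
      have h0 := H.sub_mem hf hF
      have heq : f - (fun z : ℂ × ℂ => f (w.1, z.2))
          = fun z : ℂ × ℂ => f z - f (w.1, z.2) := by
        funext z; simp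
      exact heq ▸ h0
    have hud : DifferentiableOn ℂ (fun z : ℂ × ℂ => f z - f (w.1, z.2)) bidisc := hhol _ huH
    obtain ⟨g₁, hg₁d, hg₁⟩ := keylemma1 _ hud w.1 hw1
      (fun z hz => by rw [← hz, Prod.mk.eta, sub_self])
    have hg₁H : g₁ ∈ H := by
      apply hdiv1 w.1 hw1 g₁ hg₁d
      have heq : (fun z : ℂ × ℂ => (z.1 - w.1) * g₁ z)
          = fun z : ℂ × ℂ => f z - f (w.1, z.2) := by
        funext z; rw [← hg₁ z]
      rw [heq]; exact huH
    have hvH : (fun z : ℂ × ℂ => f (w.1, z.2) - f w) ∈ H := by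
      have h1 := H.smul_mem (f w) hconst
      have h0 := H.sub_mem hF h1
      have heq : (fun z : ℂ × ℂ => f (w.1, z.2)) - f w • (fun _ : ℂ × ℂ => (1:ℂ))
          = fun z : ℂ × ℂ => f (w.1, z.2) - f w := by
        funext z; simp
      exact heq ▸ h0
    have hvd : DifferentiableOn ℂ (fun z : ℂ × ℂ => f (w.1, z.2) - f w) bidisc := hhol _ hvH
    obtain ⟨g₂, hg₂d, hg₂⟩ := keylemma _ hvd w.2 hw2
      (fun z hz => by rw [hz, Prod.mk.eta, sub_self])
    have hg₂H : g₂ ∈ H := by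
      apply hdiv2 w.2 hw2 g₂ hg₂d
      have heq : (fun z : ℂ × ℂ => (z.2 - w.2) * g₂ z)
          = fun z : ℂ × ℂ => f (w.1, z.2) - f w := by
        funext z; rw [← hg₂ z]
      rw [heq]; exact hvH
    refine ⟨g₁, g₂, hg₁H, hg₂H, fun z _ => ?_⟩
    have h1 := hg₁ z
    have h2 := hg₂ z
    linear_combination h1 + h2
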